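/- Let (M, Σ, μ, T) be a measure-preserving system and suppose A ∈ Σ with μ(A) > 0 is such that the restricted system (A, Σ∩A, μ_A, T_A) is ergodic with no set C, 0 < μ_A(C) < 1, satisfying T_Aⁿ(C) = C up to measure zero for some n. Then for every finite-valued observation function Φ = Σᵢ oᵢχ_{αᵢ} on M whose partition has at least two cells of positive measure intersected with A (i.e. there exist k ≠ l with μ(A ∩ α_k) > 0 and μ(A ∩ α_l) > 0), the process Z_t = Φ(Tᵗ) restricted to A has an outcome oᵢ such that P{Z_{t+1} = oⱼ | Z_t = oᵢ} < 1 for all outcomes oⱼ. -/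

import Mathlib

open MeasureTheory Set
open scoped ENNReal

section Aux

variable {M : Type*} [MeasurableSpace M] {μ : Measure M} {T : M → M}

lemma aux_pre (hTbij : Function.Bijective T) (hTmeas : Measurable T)
    (hTpres : ∀ B : Set M, MeasurableSet B → μ (T '' B) = μ B)
    {B : Set M} (hB : MeasurableSet B) : μ (T ⁻¹' B) = μ B := by
  have h := hTpres (T ⁻¹' B) (hTmeas hB)
  rw [Set.image_preimage_eq B hTbij.surjective] at h
  exact h.symm

lemma aux_pren (hTbij : Function.Bijective T) (hTmeas : Measurable T)
    (hTpres : ∀ B : Set M, MeasurableSet B → μ (T '' B) = μ B)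
    (n : ℕ) {B : Set M} (hB : MeasurableSet B) : μ (T^[n] ⁻¹' B) = μ B := by
  induction n with
  | zero => simp
  | succ n ih =>
    rw [Function.iterate_succ, Set.preimage_comp,
      aux_pre hTbij hTmeas hTpres ((hTmeas.iterate n) hB), ih]

lemma aux_prenull (hTbij : Function.Bijective T) (hTmeas : Measurable T)
    (hTpres : ∀ B : Set M, MeasurableSet B → μ (T '' B) = μ B)
    (n : ℕ) {N : Set M} (hN : μ N = 0) : μ (T^[n] ⁻¹' N) = 0 := by
  refine le_antisymm ?_ zero_le
  calc μ (T^[n] ⁻¹' N) ≤ μ (T^[n] ⁻¹' (toMeasurable μ N)) :=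
        measure_mono (preimage_mono (subset_toMeasurable μ N))
    _ = μ (toMeasurable μ N) :=
        aux_pren hTbij hTmeas hTpres n (measurableSet_toMeasurable μ N)
    _ = 0 := by rw [measure_toMeasurable, hN]

lemma aux_imgnull (hTmeas : Measurable T)
    (hTpres : ∀ B : Set M, MeasurableSet B → μ (T '' B) = μ B)
    (n : ℕ) {N : Set M} (hN : μ N = 0) : μ (T^[n] '' N) = 0 := by
  induction n with
  | zero => simpa using hN
  | succ n ih =>
    rw [Function.iterate_succ', Set.image_comp]
    refine le_antisymm ?_ zero_le
    calc μ (T '' (T^[n] '' N)) ≤ μ (T '' (toMeasurable μ (T^[n] '' N))) :=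
          measure_mono (image_mono (subset_toMeasurable μ _))
      _ = μ (toMeasurable μ (T^[n] '' N)) :=
          hTpres _ (measurableSet_toMeasurable μ _)
      _ = 0 := by rw [measure_toMeasurable, ih]

end Aux

theorem stmt18 {M MO : Type*} [MeasurableSpace M] [MeasurableSpace MO]
    (μ : Measure M) [IsProbabilityMeasure μ]
    (T : M → M) (hTbij : Function.Bijective T) (hTmeas : Measurable T)
    (hTpres : ∀ B : Set M, MeasurableSet B → μ (T '' B) = μ B)
    (A : Set M) (hA : MeasurableSet A) (hApos : 0 < μ A)
    -- T maps A onto A up to measure zero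
    (hAinv : μ (symmDiff (T '' A) A) = 0)
    -- the restricted system (A, μ_A, T_A) is ergodic ...
    (herg : ∀ C : Set M, MeasurableSet C → C ⊆ A →
      μ (symmDiff (T '' C) C) = 0 → μ C = 0 ∨ μ C = μ A)
    -- ... with no set C, 0 < μ_A(C) < 1, satisfying T_Aⁿ(C) = C up to measure zero
    (hnoper : ¬ ∃ (n : ℕ) (C : Set M), 1 ≤ n ∧ MeasurableSet C ∧ C ⊆ A ∧
      0 < μ C ∧ μ C < μ A ∧ μ (symmDiff (T^[n] '' C) C) = 0)
    -- a finite-valued observation function Φ = Σᵢ oᵢ χ_{αᵢ}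
    (k : ℕ) (αs : Fin k → Set M) (o : Fin k → MO) (Φ : M → MO)
    (hαmeas : ∀ i, MeasurableSet (αs i))
    (hαdisj : ∀ i j, i ≠ j → Disjoint (αs i) (αs j))
    (hαcover : (⋃ i, αs i) = univ)
    (ho : Function.Injective o)
    (hΦ : ∀ i, ∀ m ∈ αs i, Φ m = o i)
    -- at least two cells of the partition meet A in positive measure
    (htwo : ∃ k₁ k₂ : Fin k, k₁ ≠ k₂ ∧ 0 < μ (A ∩ αs k₁) ∧ 0 < μ (A ∩ αs k₂)) :
    -- there is an outcome oᵢ with P{Z_{t+1} = oⱼ | Z_t = oᵢ} < 1 for all j,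
    -- for the process Z_t = Φ(Tᵗ) restricted to A
    ∃ i : Fin k, ∀ t : ℕ,
      0 < μ (A ∩ T^[t] ⁻¹' (αs i)) ∧
      ∀ j : Fin k,
        μ (A ∩ T^[t] ⁻¹' (αs i) ∩ T^[t + 1] ⁻¹' (αs j))
          < μ (A ∩ T^[t] ⁻¹' (αs i)) := by
  -- A is invariant mod 0 under preimage as well
  have hApre : μ (A \ T ⁻¹' A) = 0 := by
    have hsub : A \ T ⁻¹' A ⊆ T ⁻¹' (T '' A \ A) := by
      intro x hx
      exact ⟨mem_image_of_mem T hx.1, hx.2⟩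
    have hnull : μ (T '' A \ A) = 0 := by
      refine le_antisymm (le_trans (measure_mono ?_) hAinv.le) zero_le
      rw [Set.symmDiff_def]
      exact subset_union_left
    have := aux_prenull hTbij hTmeas hTpres 1 hnull
    simp only [Function.iterate_one] at this
    exact le_antisymm (le_trans (measure_mono hsub) this.le) zero_le
  have haeA : (T ⁻¹' A : Set M) =ᵐ[μ] A := by
    rw [← measure_symmDiff_eq_zero_iff, Set.symmDiff_def]
    refine le_antisymm (le_trans (measure_union_le _ _) ?_) zero_le
    have h1 : μ (T ⁻¹' A \ A) = 0 := by
      have e1 : μ (A ∩ T ⁻¹' A) + μ (A \ T ⁻¹' A) = μ A :=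
        measure_inter_add_diff A (hTmeas hA)
      rw [hApre, add_zero] at e1
      have e2 : μ (T ⁻¹' A ∩ A) + μ (T ⁻¹' A \ A) = μ (T ⁻¹' A) :=
        measure_inter_add_diff _ hA
      rw [Set.inter_comm, e1, aux_pre hTbij hTmeas hTpres hA] at e2
      have := ENNReal.add_sub_cancel_left (a := μ A) (b := μ (T ⁻¹' A \ A))
        (measure_ne_top μ A)
      rw [e2, tsub_self] at this
      exact this.symm
    rw [h1, hApre, add_zero]
  -- one-step invariance of measures of sets intersected with A
  have hinv1 : ∀ S : Set M, MeasurableSet S → μ (A ∩ T ⁻¹' S) = μ (A ∩ S) := by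
    intro S hS
    calc μ (A ∩ T ⁻¹' S) = μ (T ⁻¹' A ∩ T ⁻¹' S) :=
          (measure_congr (haeA.inter (Filter.EventuallyEq.refl _ _))).symm
      _ = μ (T ⁻¹' (A ∩ S)) := by rw [Set.preimage_inter]
      _ = μ (A ∩ S) := aux_pre hTbij hTmeas hTpres (hA.inter hS)
  have hinvt : ∀ (t : ℕ) (S : Set M), MeasurableSet S →
      μ (A ∩ T^[t] ⁻¹' S) = μ (A ∩ S) := by
    intro t
    induction t with
    | zero => intro S hS; simp
    | succ t ih =>
      intro S hS
      rw [Function.iterate_succ, Set.preimage_comp,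
        hinv1 _ ((hTmeas.iterate t) hS), ih S hS]
  -- reduce to the t = 0 statement
  suffices h : ∃ i : Fin k, 0 < μ (A ∩ αs i) ∧
      ∀ j : Fin k, μ (A ∩ αs i ∩ T ⁻¹' αs j) < μ (A ∩ αs i) by
    obtain ⟨i, hipos, hilt⟩ := h
    refine ⟨i, fun t => ⟨?_, fun j => ?_⟩⟩
    · rw [hinvt t (αs i) (hαmeas i)]; exact hipos
    · have hpre : (T^[t + 1] ⁻¹' (αs j) : Set M) = T^[t] ⁻¹' (T ⁻¹' (αs j)) := by
        rw [Function.iterate_succ', Set.preimage_comp]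
      have hset : A ∩ T^[t] ⁻¹' (αs i) ∩ T^[t + 1] ⁻¹' (αs j)
          = A ∩ T^[t] ⁻¹' (αs i ∩ T ⁻¹' (αs j)) := by
        rw [hpre, Set.preimage_inter, Set.inter_assoc]
      rw [hset, hinvt t _ ((hαmeas i).inter (hTmeas (hαmeas j))),
        hinvt t (αs i) (hαmeas i), ← Set.inter_assoc]
      exact hilt j
  by_contra hcon
  push_neg at hcon
  -- build the deterministic successor function on positive cells
  choose g hg using hcon
  let f : Fin k → Fin k := fun i => if h : 0 < μ (A ∩ αs i) then g i h else i
  have hf : ∀ i, 0 < μ (A ∩ αs i) →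
      μ (A ∩ αs i ∩ T ⁻¹' αs (f i)) = μ (A ∩ αs i) := by
    intro i h
    have hfi : f i = g i h := dif_pos h
    rw [hfi]
    exact le_antisymm (measure_mono inter_subset_left) (hg i h)
  have hfpos : ∀ i, 0 < μ (A ∩ αs i) → 0 < μ (A ∩ αs (f i)) := by
    intro i h
    have h1 : μ (A ∩ αs i ∩ T ⁻¹' αs (f i)) ≤ μ (A ∩ T ⁻¹' αs (f i)) :=
      measure_mono (inter_subset_inter_left _ inter_subset_left)
    rw [hf i h, hinv1 _ (hαmeas (f i))] at h1
    exact lt_of_lt_of_le h h1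
  obtain ⟨k₁, k₂, hk12, hk1, hk2⟩ := htwo
  have hiterpos : ∀ m, 0 < μ (A ∩ αs (f^[m] k₁)) := by
    intro m
    induction m with
    | zero => simpa using hk1
    | succ m ih => rw [Function.iterate_succ_apply']; exact hfpos _ ih
  -- pigeonhole: find a cycle
  obtain ⟨a, b, hab, heq⟩ :=
    Finite.exists_ne_map_eq_of_infinite (fun m : ℕ => f^[m] k₁)
  wlog hlt' : a < b generalizing a b
  · exact this b a hab.symm heq.symm (hab.lt_or_gt.resolve_left hlt')
  set i₀ : Fin k := f^[a] k₁ with hi₀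
  set n : ℕ := b - a with hn
  have hn1 : 1 ≤ n := Nat.le_sub_of_add_le (by omega)
  have hcycle : f^[n] i₀ = i₀ := by
    have : f^[n] (f^[a] k₁) = f^[n + a] k₁ := (Function.iterate_add_apply f n a k₁).symm
    rw [hi₀, this, show n + a = b by omega]
    exact heq.symm
  have hi₀pos : ∀ m, 0 < μ (A ∩ αs (f^[m] i₀)) := by
    intro m
    rw [hi₀, ← Function.iterate_add_apply]
    exact hiterpos (m + a)
  set C : Set M := A ∩ αs i₀ with hC
  have hCmeas : MeasurableSet C := hA.inter (hαmeas i₀)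
  have hCpos : 0 < μ C := by simpa using hi₀pos 0
  -- μ C < μ A using the second positive cell
  have hClt : μ C < μ A := by
    obtain ⟨k', hk'ne, hk'pos⟩ : ∃ k', k' ≠ i₀ ∧ 0 < μ (A ∩ αs k') := by
      by_cases h : k₁ = i₀
      · exact ⟨k₂, fun hh => hk12 (h.trans hh.symm), hk2⟩
      · exact ⟨k₁, h, hk1⟩
    have hdisj : Disjoint C (A ∩ αs k') :=
      (hαdisj i₀ k' (fun hh => hk'ne hh.symm)).mono inter_subset_right inter_subset_right
    have hun : μ C + μ (A ∩ αs k') = μ (C ∪ (A ∩ αs k')) :=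
      (measure_union hdisj (hA.inter (hαmeas k'))).symm
    have hle : μ (C ∪ (A ∩ αs k')) ≤ μ A :=
      measure_mono (union_subset inter_subset_left inter_subset_left)
    calc μ C < μ C + μ (A ∩ αs k') :=
          ENNReal.lt_add_right (measure_ne_top μ C) hk'pos.ne'
      _ ≤ μ A := hun.le.trans hle
  -- one mod-0 step
  have hstep : ∀ j, 0 < μ (A ∩ αs j) →
      μ ((A ∩ αs j) \ T ⁻¹' (A ∩ αs (f j))) = 0 := by
    intro j hj
    have h1 : μ ((A ∩ αs j) \ T ⁻¹' (αs (f j))) = 0 := by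
      have e := measure_inter_add_diff (μ := μ) (A ∩ αs j) (hTmeas (hαmeas (f j)))
      rw [hf j hj] at e
      have := ENNReal.add_sub_cancel_left (a := μ (A ∩ αs j))
        (b := μ ((A ∩ αs j) \ T ⁻¹' (αs (f j)))) (measure_ne_top μ _)
      rw [e, tsub_self] at this
      exact this.symm
    have hsub : (A ∩ αs j) \ T ⁻¹' (A ∩ αs (f j)) ⊆
        (A \ T ⁻¹' A) ∪ ((A ∩ αs j) \ T ⁻¹' (αs (f j))) := by
      rw [Set.preimage_inter]
      intro x hx
      by_cases hxa : x ∈ T ⁻¹' A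
      · exact Or.inr ⟨hx.1, fun hh => hx.2 ⟨hxa, hh⟩⟩
      · exact Or.inl ⟨hx.1.1, hxa⟩
    refine le_antisymm (le_trans (measure_mono hsub) ?_) zero_le
    calc μ ((A \ T ⁻¹' A) ∪ ((A ∩ αs j) \ T ⁻¹' (αs (f j))))
        ≤ μ (A \ T ⁻¹' A) + μ ((A ∩ αs j) \ T ⁻¹' (αs (f j))) := measure_union_le _ _
      _ = 0 := by rw [hApre, h1, add_zero]
  -- iterate the step
  have hclaim : ∀ m, μ (C \ T^[m] ⁻¹' (A ∩ αs (f^[m] i₀))) = 0 := by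
    intro m
    induction m with
    | zero => simp [hC]
    | succ m ih =>
      have hkey : C \ T^[m + 1] ⁻¹' (A ∩ αs (f^[m + 1] i₀)) ⊆
          (C \ T^[m] ⁻¹' (A ∩ αs (f^[m] i₀))) ∪
          T^[m] ⁻¹' ((A ∩ αs (f^[m] i₀)) \ T ⁻¹' (A ∩ αs (f (f^[m] i₀)))) := by
        rw [Function.iterate_succ_apply' f m i₀, Function.iterate_succ' T m,
          Set.preimage_comp]
        intro x hx
        by_cases hxm : x ∈ T^[m] ⁻¹' (A ∩ αs (f^[m] i₀))
        · exact Or.inr ⟨hxm, hx.2⟩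
        · exact Or.inl ⟨hx.1, hxm⟩
      refine le_antisymm (le_trans (measure_mono hkey) ?_) zero_le
      calc μ ((C \ T^[m] ⁻¹' (A ∩ αs (f^[m] i₀))) ∪
            T^[m] ⁻¹' ((A ∩ αs (f^[m] i₀)) \ T ⁻¹' (A ∩ αs (f (f^[m] i₀)))))
          ≤ μ (C \ T^[m] ⁻¹' (A ∩ αs (f^[m] i₀))) +
            μ (T^[m] ⁻¹' ((A ∩ αs (f^[m] i₀)) \ T ⁻¹' (A ∩ αs (f (f^[m] i₀))))) :=
            measure_union_le _ _
        _ = 0 := by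
            rw [ih, aux_prenull hTbij hTmeas hTpres m (hstep _ (hi₀pos m)), add_zero]
  have hd1 : μ (C \ T^[n] ⁻¹' C) = 0 := by
    have := hclaim n
    rwa [hcycle] at this
  have hd2 : μ (T^[n] ⁻¹' C \ C) = 0 := by
    have e1 : μ (C ∩ T^[n] ⁻¹' C) + μ (C \ T^[n] ⁻¹' C) = μ C :=
      measure_inter_add_diff C ((hTmeas.iterate n) hCmeas)
    rw [hd1, add_zero] at e1
    have e2 : μ (T^[n] ⁻¹' C ∩ C) + μ (T^[n] ⁻¹' C \ C) = μ (T^[n] ⁻¹' C) :=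
      measure_inter_add_diff _ hCmeas
    rw [Set.inter_comm, e1, aux_pren hTbij hTmeas hTpres n hCmeas] at e2
    have := ENNReal.add_sub_cancel_left (a := μ C) (b := μ (T^[n] ⁻¹' C \ C))
      (measure_ne_top μ C)
    rw [e2, tsub_self] at this
    exact this.symm
  -- translate to images
  have hF : Function.Bijective (T^[n]) := hTbij.iterate n
  have himg1 : T^[n] '' C \ C = T^[n] '' (C \ T^[n] ⁻¹' C) := by
    rw [Set.diff_eq, Set.diff_eq, ← Set.preimage_compl, Set.image_inter_preimage]
  have himg2 : C \ T^[n] '' C = T^[n] '' (T^[n] ⁻¹' C \ C) := by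
    ext x
    constructor
    · rintro ⟨hxC, hxn⟩
      obtain ⟨y, hy⟩ := hF.surjective x
      refine ⟨y, ⟨show T^[n] y ∈ C by rw [hy]; exact hxC, fun hyC => hxn ⟨y, hyC, hy⟩⟩, hy⟩
    · rintro ⟨y, ⟨hy1, hy2⟩, rfl⟩
      exact ⟨hy1, fun ⟨z, hz, hze⟩ => hy2 (hF.injective hze ▸ hz)⟩
  have hsymm : μ (symmDiff (T^[n] '' C) C) = 0 := by
    rw [Set.symmDiff_def]
    refine le_antisymm (le_trans (measure_union_le _ _) ?_) zero_le
    rw [himg1, himg2, aux_imgnull hTmeas hTpres n hd1,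
      aux_imgnull hTmeas hTpres n hd2, add_zero]
  exact hnoper ⟨n, C, hn1, hCmeas, inter_subset_left, hCpos, hClt, hsymm⟩
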